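/- Fix I ≥ 2. For Lebesgue-almost every Z ∈ ℝ^{I×I×2} the following holds: if the tensor rank of Z equals I+1, and (Q_a, Q_b, R₁, R₂) is an optimal solution of the GSD problem for Z with R = I (i.e., it minimizes Σ_{k=1}^{2} ‖Z_k − Q_a·R_k·Q_bᵀ‖²_F over orthonormal Q_a, Q_b ∈ ℝ^{I×I} and upper triangular R₁, R₂ ∈ ℝ^{I×I}) such that the second-order conditions are strictly positive, then the tensor rank of the I×I×2 array with frontal slices R₁ and R₂ is strictly larger than I. -/

import Mathlib

open Matrix MeasureTheory
open scoped BigOperators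

/-- The tensor rank of a real `I × J × K` array: the smallest `R` such that the array
is a sum of `R` rank-1 (outer product) arrays. -/
noncomputable def tensorRank {I J K : ℕ} (Y : Fin I → Fin J → Fin K → ℝ) : ℕ :=
  sInf {R : ℕ | ∃ (a : Fin R → Fin I → ℝ) (b : Fin R → Fin J → ℝ) (c : Fin R → Fin K → ℝ),
    ∀ i j k, Y i j k = ∑ r, a r i * b r j * c r k}

/-- The `k`-th frontal slice of an `I × J × 2` array, as a matrix. -/
def sliceMat {I J : ℕ} (Z : Fin I → Fin J → Fin 2 → ℝ) (k : Fin 2) :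
    Matrix (Fin I) (Fin J) ℝ :=
  Matrix.of fun i j => Z i j k

/-- The GSD objective function: `∑ₖ ‖Z_k - Qa R_k Qbᵀ‖²_F`. -/
noncomputable def gsdObj {I J R : ℕ} (Z : Fin I → Fin J → Fin 2 → ℝ)
    (Qa : Matrix (Fin I) (Fin R) ℝ) (Qb : Matrix (Fin J) (Fin R) ℝ)
    (R1 R2 : Matrix (Fin R) (Fin R) ℝ) : ℝ :=
  ∑ k : Fin 2, ∑ i, ∑ j, (Z i j k - (Qa * (![R1, R2] k) * Qbᵀ) i j) ^ 2

/-- Strict positivity of the second-order optimality conditions, in terms of the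
transformed slices `Z̃ₖ`. -/
def secondOrderStrict {R : ℕ} (Zt : Fin 2 → Matrix (Fin R) (Fin R) ℝ) : Prop :=
  ∀ i j : Fin R, i < j →
    (0 < (∑ r ∈ Finset.univ.filter (fun r : Fin R => i ≤ r ∧ r < j),
            ∑ k : Fin 2, (Zt k i r) ^ 2)
        - ∑ r ∈ Finset.univ.filter (fun r : Fin R => i ≤ r ∧ r < j),
            ∑ k : Fin 2, (Zt k j r) ^ 2) ∧
    (0 < (∑ r ∈ Finset.univ.filter (fun r : Fin R => i < r ∧ r ≤ j),
            ∑ k : Fin 2, (Zt k r j) ^ 2)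
        - ∑ r ∈ Finset.univ.filter (fun r : Fin R => i < r ∧ r ≤ j),
            ∑ k : Fin 2, (Zt k r i) ^ 2)

namespace Stmt9Aux

variable {I : ℕ}

/-! ### QR and QL decompositions -/

lemma exists_qr (A : Matrix (Fin I) (Fin I) ℝ) :
    ∃ Q U : Matrix (Fin I) (Fin I) ℝ,
      Qᵀ * Q = 1 ∧ Q * Qᵀ = 1 ∧ U.BlockTriangular id ∧ A = Q * U := by
  classical
  haveI : WellFoundedLT (Fin I) := inferInstance
  have h : Module.finrank ℝ (EuclideanSpace ℝ (Fin I)) = Fintype.card (Fin I) :=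
    finrank_euclideanSpace
  let f : Fin I → EuclideanSpace ℝ (Fin I) := fun j => WithLp.toLp 2 (fun i => A i j)
  let o : OrthonormalBasis (Fin I) ℝ (EuclideanSpace ℝ (Fin I)) :=
    InnerProductSpace.gramSchmidtOrthonormalBasis h f
  let Q : Matrix (Fin I) (Fin I) ℝ := Matrix.of fun i j => o j i
  let U : Matrix (Fin I) (Fin I) ℝ := Matrix.of fun i j => inner ℝ (o i) (f j)
  have hortho : Qᵀ * Q = 1 := by
    ext i j
    have h2 : (inner ℝ (o i) (o j) : ℝ) = if i = j then 1 else 0 :=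
      orthonormal_iff_ite.mp o.orthonormal i j
    simp only [Matrix.mul_apply, Matrix.transpose_apply, Matrix.one_apply, Q, Matrix.of_apply]
    rw [← h2]
    simp [PiLp.inner_apply, RCLike.inner_apply, mul_comm]
  refine ⟨Q, U, hortho, ?_, ?_, ?_⟩
  · exact mul_eq_one_comm.mp hortho
  · intro i j hij
    simpa [U] using InnerProductSpace.gramSchmidtOrthonormalBasis_inv_triangular h f hij
  · ext i j
    have hrepr := o.sum_repr (f j)
    have hra : ∀ m, o.repr (f j) m = inner ℝ (o m) (f j) := fun m => o.repr_apply_apply (f j) m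
    simp only [hra] at hrepr
    have key : (∑ x : Fin I, (inner ℝ (o x) (f j) : ℝ) • o x) i = f j i :=
      congrFun (congrArg (fun (x : EuclideanSpace ℝ (Fin I)) => (x : Fin I → ℝ)) hrepr) i
    simp only [Matrix.mul_apply, Q, U, Matrix.of_apply]
    have hAij : A i j = f j i := rfl
    rw [hAij, ← key]
    have : (∑ x : Fin I, (inner ℝ (o x) (f j) : ℝ) • o x) i
        = ∑ x : Fin I, (inner ℝ (o x) (f j) : ℝ) * o x i := by
      rw [WithLp.ofLp_sum, Finset.sum_apply]
      exact Finset.sum_congr rfl fun m _ => rfl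
    rw [this]
    exact Finset.sum_congr rfl fun m _ => mul_comm _ _

/-- The reversal permutation matrix. -/
def revMat (I : ℕ) : Matrix (Fin I) (Fin I) ℝ :=
  Matrix.of fun i j => if j = i.rev then 1 else 0

lemma revMat_mul_apply (M : Matrix (Fin I) (Fin I) ℝ) (i j : Fin I) :
    (revMat I * M) i j = M i.rev j := by
  rw [Matrix.mul_apply]
  rw [Finset.sum_eq_single i.rev]
  · simp [revMat]
  · intro k _ hk
    simp [revMat, hk]
  · simp

lemma mul_revMat_apply (M : Matrix (Fin I) (Fin I) ℝ) (i j : Fin I) :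
    (M * revMat I) i j = M i j.rev := by
  rw [Matrix.mul_apply]
  rw [Finset.sum_eq_single j.rev]
  · simp [revMat, Fin.rev_rev]
  · intro k _ hk
    have : j ≠ k.rev := by
      intro h; exact hk (by rw [h, Fin.rev_rev])
    simp [revMat, this]
  · simp

lemma revMat_transpose : (revMat I)ᵀ = revMat I := by
  ext i j
  simp only [Matrix.transpose_apply, revMat, Matrix.of_apply]
  have : (i = j.rev) ↔ (j = i.rev) := by
    constructor <;> (intro h; rw [h, Fin.rev_rev])
  by_cases h : i = j.rev
  · rw [if_pos h, if_pos (this.mp h)]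
  · rw [if_neg h, if_neg (fun hh => h (this.mpr hh))]

lemma revMat_mul_revMat : revMat I * revMat I = 1 := by
  ext i j
  rw [revMat_mul_apply]
  by_cases h : i = j
  · subst h; simp [revMat, Matrix.one_apply, Fin.rev_rev]
  · have h2 : j ≠ i.rev.rev := by rw [Fin.rev_rev]; exact fun hh => h hh.symm
    simp [revMat, Matrix.one_apply, h2, Ne.symm h, h]

lemma orth_mul {P Q : Matrix (Fin I) (Fin I) ℝ} (hP : Pᵀ * P = 1) (hQ : Qᵀ * Q = 1) :
    (P * Q)ᵀ * (P * Q) = 1 := by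
  rw [Matrix.transpose_mul, Matrix.mul_assoc, ← Matrix.mul_assoc Pᵀ P Q, hP,
    Matrix.one_mul, hQ]

lemma revMat_diagonal (v : Fin I → ℝ) :
    revMat I * Matrix.diagonal v * revMat I = Matrix.diagonal (fun r => v r.rev) := by
  ext i j
  rw [mul_revMat_apply, revMat_mul_apply]
  by_cases h : i = j
  · subst h; simp [Matrix.diagonal_apply_eq]
  · rw [Matrix.diagonal_apply_ne _ (fun hh => h (Fin.rev_injective hh)),
      Matrix.diagonal_apply_ne _ h]

lemma revMat_orth : (revMat I)ᵀ * revMat I = 1 := by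
  rw [revMat_transpose]; exact revMat_mul_revMat

lemma exists_ql (B : Matrix (Fin I) (Fin I) ℝ) :
    ∃ Q M : Matrix (Fin I) (Fin I) ℝ,
      Qᵀ * Q = 1 ∧ Q * Qᵀ = 1 ∧ M.BlockTriangular id ∧ B = Q * Mᵀ := by
  obtain ⟨Q0, U0, hQ0a, _hQ0b, hU0, hfac⟩ := exists_qr (revMat I * B * revMat I)
  have horth : ((revMat I * Q0) * revMat I)ᵀ * ((revMat I * Q0) * revMat I) = 1 :=
    orth_mul (orth_mul revMat_orth hQ0a) revMat_orth
  refine ⟨revMat I * Q0 * revMat I, revMat I * U0ᵀ * revMat I, horth,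
    mul_eq_one_comm.mp horth, ?_, ?_⟩
  · intro i j hij
    rw [mul_revMat_apply, revMat_mul_apply, Matrix.transpose_apply]
    exact hU0 (by simpa [Fin.rev_lt_rev] using hij)
  · have hB : B = revMat I * (Q0 * U0) * revMat I := by
      rw [← hfac]
      calc B = (revMat I * revMat I) * B * (revMat I * revMat I) := by
              rw [revMat_mul_revMat]; simp
        _ = revMat I * (revMat I * B * revMat I) * revMat I := by
              simp only [Matrix.mul_assoc]
    rw [hB]
    have hT : (revMat I * U0ᵀ * revMat I)ᵀ = revMat I * U0 * revMat I := by
      simp [Matrix.transpose_mul, revMat_transpose, Matrix.mul_assoc]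
    rw [hT]
    calc revMat I * (Q0 * U0) * revMat I
        = revMat I * Q0 * (revMat I * revMat I) * U0 * revMat I := by
          rw [revMat_mul_revMat]; simp [Matrix.mul_assoc]
      _ = revMat I * Q0 * revMat I * (revMat I * U0 * revMat I) := by
          simp [Matrix.mul_assoc]

/-! ### Squared Frobenius norm -/

/-- Squared Frobenius norm. -/
def sqn (M : Matrix (Fin I) (Fin I) ℝ) : ℝ := ∑ i, ∑ j, (M i j) ^ 2

/-- Entry-wise inner product. -/
def ipr (M N : Matrix (Fin I) (Fin I) ℝ) : ℝ := ∑ i, ∑ j, M i j * N i j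

lemma sqn_eq_trace (M : Matrix (Fin I) (Fin I) ℝ) : sqn M = Matrix.trace (M * Mᵀ) := by
  simp [sqn, Matrix.trace, Matrix.diag, Matrix.mul_apply, sq]

lemma sqn_conj {Qa Qb : Matrix (Fin I) (Fin I) ℝ} (M : Matrix (Fin I) (Fin I) ℝ)
    (hQa : Qaᵀ * Qa = 1) (hQb : Qbᵀ * Qb = 1) :
    sqn (Qa * M * Qbᵀ) = sqn M := by
  rw [sqn_eq_trace, sqn_eq_trace]
  have h1 : (Qa * M * Qbᵀ) * (Qa * M * Qbᵀ)ᵀ = Qa * (M * Mᵀ) * Qaᵀ := by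
    simp only [Matrix.transpose_mul, Matrix.transpose_transpose]
    calc Qa * M * Qbᵀ * (Qb * (Mᵀ * Qaᵀ))
        = Qa * M * (Qbᵀ * Qb) * (Mᵀ * Qaᵀ) := by simp only [Matrix.mul_assoc]
      _ = Qa * (M * Mᵀ) * Qaᵀ := by rw [hQb]; simp only [Matrix.mul_one, Matrix.mul_assoc]
  rw [h1, Matrix.trace_mul_cycle, ← Matrix.mul_assoc, hQa, Matrix.one_mul]

lemma sqn_nonneg (M : Matrix (Fin I) (Fin I) ℝ) : 0 ≤ sqn M :=
  Finset.sum_nonneg fun _ _ => Finset.sum_nonneg fun _ _ => sq_nonneg _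

lemma sqn_sub_smul (X Y : Matrix (Fin I) (Fin I) ℝ) (t : ℝ) :
    sqn (X - t • Y) = sqn X - 2 * t * ipr X Y + t ^ 2 * sqn Y := by
  have hpt : ∀ i j : Fin I, ((X - t • Y) i j) ^ 2
      = (X i j) ^ 2 - 2 * t * (X i j * Y i j) + t ^ 2 * (Y i j) ^ 2 := by
    intro i j
    simp only [Matrix.sub_apply, Matrix.smul_apply, smul_eq_mul]
    ring
  have hrow : ∀ i : Fin I, ∑ j, ((X - t • Y) i j) ^ 2
      = (∑ j, (X i j) ^ 2) - 2 * t * (∑ j, X i j * Y i j) + t ^ 2 * (∑ j, (Y i j) ^ 2) := by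
    intro i
    rw [Finset.sum_congr rfl (fun j _ => hpt i j), Finset.sum_add_distrib,
      Finset.sum_sub_distrib, ← Finset.mul_sum, ← Finset.mul_sum]
  unfold sqn ipr
  rw [Finset.sum_congr rfl (fun i _ => hrow i), Finset.sum_add_distrib,
    Finset.sum_sub_distrib, ← Finset.mul_sum, ← Finset.mul_sum]

/-- If `0 ≤ -2 t s + t² w` for all `t`, with `w ≥ 0`, then `s = 0`. -/
lemma qzero {s w : ℝ} (hw : 0 ≤ w) (H : ∀ t : ℝ, 0 ≤ - (2 * t * s) + t ^ 2 * w) :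
    s = 0 := by
  by_contra hs
  have hw1 : 0 < w + 1 := by linarith
  have h := H (s / (w + 1))
  rw [div_pow] at h
  have h2 : 0 ≤ (- (2 * (s / (w + 1)) * s) + s ^ 2 / (w + 1) ^ 2 * w) * (w + 1) ^ 2 :=
    mul_nonneg h (by positivity)
  have hexp : (- (2 * (s / (w + 1)) * s) + s ^ 2 / (w + 1) ^ 2 * w) * (w + 1) ^ 2
      = - (s ^ 2) * (w + 2) := by
    field_simp
    ring
  rw [hexp] at h2
  nlinarith [sq_pos_of_ne_zero hs]

/-- Sum of nonnegative triple-indexed terms being ≤ 0 forces each to vanish. -/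
lemma sum3_eq_zero {f : Fin 2 → Fin I → Fin I → ℝ}
    (h0 : ∀ k i j, 0 ≤ f k i j)
    (h : (∑ k : Fin 2, ∑ i, ∑ j, f k i j) ≤ 0) : ∀ k i j, f k i j = 0 := by
  have hk : ∀ k ∈ Finset.univ, (0:ℝ) ≤ ∑ i, ∑ j, f k i j :=
    fun k _ => Finset.sum_nonneg fun i _ => Finset.sum_nonneg fun j _ => h0 k i j
  have h1 : ∑ k : Fin 2, ∑ i, ∑ j, f k i j = 0 :=
    le_antisymm h (Finset.sum_nonneg hk)
  have h2 := (Finset.sum_eq_zero_iff_of_nonneg hk).mp h1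
  intro k i j
  have hi : ∀ i ∈ Finset.univ, (0:ℝ) ≤ ∑ j, f k i j :=
    fun i _ => Finset.sum_nonneg fun j _ => h0 k i j
  have h3 := (Finset.sum_eq_zero_iff_of_nonneg hi).mp (h2 k (Finset.mem_univ k)) i
    (Finset.mem_univ i)
  have hj : ∀ j ∈ Finset.univ, (0:ℝ) ≤ f k i j := fun j _ => h0 k i j
  exact (Finset.sum_eq_zero_iff_of_nonneg hj).mp h3 j (Finset.mem_univ j)

/-! ### Decomposition existence helpers -/

/-- Every `I × I × 2` array admits a decomposition with `2 * I` rank-one terms. -/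
lemma decomp_base (Y : Fin I → Fin I → Fin 2 → ℝ) :
    ∃ (a : Fin (2 * I) → Fin I → ℝ) (b : Fin (2 * I) → Fin I → ℝ)
      (c : Fin (2 * I) → Fin 2 → ℝ),
      ∀ i j k, Y i j k = ∑ r, a r i * b r j * c r k := by
  classical
  refine ⟨fun r i => if i = (finProdFinEquiv.symm r).2 then 1 else 0,
          fun r j => Y (finProdFinEquiv.symm r).2 j (finProdFinEquiv.symm r).1,
          fun r k => if k = (finProdFinEquiv.symm r).1 then 1 else 0, ?_⟩
  intro i j k
  rw [← Equiv.sum_comp (finProdFinEquiv : Fin 2 × Fin I ≃ Fin (2 * I))]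
  simp only [Equiv.symm_apply_apply]
  rw [Fintype.sum_prod_type]
  rw [Finset.sum_eq_single k]
  · rw [Finset.sum_eq_single i]
    · simp
    · intro p _ hp
      simp [Ne.symm hp]
    · simp
  · intro kk _ hkk
    apply Finset.sum_eq_zero
    intro p _
    simp [Ne.symm hkk]
  · simp

lemma decomp_pad {n : ℕ} (Y : Fin I → Fin I → Fin 2 → ℝ)
    (h : ∃ (a : Fin n → Fin I → ℝ) (b : Fin n → Fin I → ℝ) (c : Fin n → Fin 2 → ℝ),
      ∀ i j k, Y i j k = ∑ r, a r i * b r j * c r k) :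
    ∃ (a : Fin (n + 1) → Fin I → ℝ) (b : Fin (n + 1) → Fin I → ℝ)
      (c : Fin (n + 1) → Fin 2 → ℝ),
      ∀ i j k, Y i j k = ∑ r, a r i * b r j * c r k := by
  obtain ⟨a, b, c, h⟩ := h
  refine ⟨Fin.snoc a (fun _ => 0), Fin.snoc b (fun _ => 0), Fin.snoc c (fun _ => 0), ?_⟩
  intro i j k
  rw [Fin.sum_univ_castSucc]
  simp only [Fin.snoc_castSucc, Fin.snoc_last]
  rw [h i j k]
  simp

lemma decomp_of_le {n m : ℕ} (hnm : n ≤ m) (Y : Fin I → Fin I → Fin 2 → ℝ)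
    (h : ∃ (a : Fin n → Fin I → ℝ) (b : Fin n → Fin I → ℝ) (c : Fin n → Fin 2 → ℝ),
      ∀ i j k, Y i j k = ∑ r, a r i * b r j * c r k) :
    ∃ (a : Fin m → Fin I → ℝ) (b : Fin m → Fin I → ℝ) (c : Fin m → Fin 2 → ℝ),
      ∀ i j k, Y i j k = ∑ r, a r i * b r j * c r k := by
  induction m, hnm using Nat.le_induction with
  | base => exact h
  | succ m _ ih => exact decomp_pad Y ih

/-! ### Misc matrix helpers -/

/-- Single-entry matrix. -/
def single (m n : Fin I) : Matrix (Fin I) (Fin I) ℝ :=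
  Matrix.of fun p q => if p = m ∧ q = n then (1 : ℝ) else 0

lemma single_bt {m n : Fin I} (hmn : m ≤ n) : (single m n).BlockTriangular id := by
  intro i j hij
  have : ¬(i = m ∧ j = n) := by
    rintro ⟨rfl, rfl⟩
    exact absurd (lt_of_le_of_lt hmn hij) (lt_irrefl _)
  simp [single, this]

lemma mul_single_mul (A' B' : Matrix (Fin I) (Fin I) ℝ) (m n i j : Fin I) :
    (A' * single m n * B'ᵀ) i j = A' i m * B' j n := by
  have h1 : ∀ q, (A' * single m n) i q = if q = n then A' i m else 0 := by
    intro q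
    rw [Matrix.mul_apply, Finset.sum_eq_single m]
    · by_cases hq : q = n <;> simp [single, hq]
    · intro p _ hp
      simp [single, hp]
    · simp
  rw [Matrix.mul_apply]
  rw [Finset.sum_eq_single n]
  · simp [h1]
  · intro q _ hq
    simp [h1, hq]
  · simp

lemma smul_bt {M : Matrix (Fin I) (Fin I) ℝ} (t : ℝ) (hM : M.BlockTriangular id) :
    (t • M).BlockTriangular id := by
  intro i j hij
  simp [Matrix.smul_apply, hM hij]

lemma zero_bt : (0 : Matrix (Fin I) (Fin I) ℝ).BlockTriangular id := by
  intro i j _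
  simp

lemma triple_prod (Qa Qb M : Matrix (Fin I) (Fin I) ℝ) (a b : Fin I → Fin I → ℝ)
    (cc : Fin I → ℝ) (hM : ∀ p q, M p q = ∑ r, a r p * b r q * cc r) (i j : Fin I) :
    (Qa * M * Qbᵀ) i j = ∑ r, (∑ p, Qa i p * a r p) * (∑ q, Qb j q * b r q) * cc r := by
  have lhs : (Qa * M * Qbᵀ) i j = ∑ q, ∑ p, ∑ r, Qa i p * (a r p * b r q * cc r) * Qb j q := by
    simp only [Matrix.mul_apply, Matrix.transpose_apply]
    refine Finset.sum_congr rfl fun q _ => ?_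
    rw [Finset.sum_mul]
    refine Finset.sum_congr rfl fun p _ => ?_
    rw [hM p q, Finset.mul_sum, Finset.sum_mul]
  rw [lhs]
  rw [Finset.sum_comm]
  -- now ∑ p ∑ q ∑ r → want ∑ r (..)*(..)*cc r
  have rhs : ∀ r, (∑ p, Qa i p * a r p) * (∑ q, Qb j q * b r q) * cc r
      = ∑ p, ∑ q, Qa i p * (a r p * b r q * cc r) * Qb j q := by
    intro r
    rw [Finset.sum_mul_sum, Finset.sum_mul]
    refine Finset.sum_congr rfl fun p _ => ?_
    rw [Finset.sum_mul]
    refine Finset.sum_congr rfl fun q _ => ?_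
    ring
  rw [Finset.sum_congr rfl fun r _ => rhs r]
  exact (Finset.sum_congr rfl fun p _ => Finset.sum_comm).trans Finset.sum_comm

end Stmt9Aux

open Stmt9Aux

theorem stmt9 {I : ℕ} (hI : 2 ≤ I) :
    ∀ᵐ Z ∂(volume : Measure (Fin I → Fin I → Fin 2 → ℝ)),
      tensorRank Z = I + 1 →
      ∀ Qa Qb R1 R2 : Matrix (Fin I) (Fin I) ℝ,
        Qaᵀ * Qa = 1 → Qa * Qaᵀ = 1 → Qbᵀ * Qb = 1 → Qb * Qbᵀ = 1 →
        R1.BlockTriangular id → R2.BlockTriangular id →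
        (∀ Qa' Qb' R1' R2' : Matrix (Fin I) (Fin I) ℝ,
          Qa'ᵀ * Qa' = 1 → Qa' * Qa'ᵀ = 1 → Qb'ᵀ * Qb' = 1 → Qb' * Qb'ᵀ = 1 →
          R1'.BlockTriangular id → R2'.BlockTriangular id →
          gsdObj Z Qa Qb R1 R2 ≤ gsdObj Z Qa' Qb' R1' R2') →
        secondOrderStrict (fun k => Qaᵀ * sliceMat Z k * Qb) →
        I < tensorRank (fun (i j : Fin I) (k : Fin 2) => (![R1, R2] k) i j) := by
  refine MeasureTheory.ae_of_all _ ?_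
  intro Z hZrank Qa Qb R1 R2 hQa1 hQa2 hQb1 hQb2 hR1t hR2t hopt hsos
  classical
  by_contra hcon
  push_neg at hcon
  -- `hcon : tensorRank Rt ≤ I`
  -- Step 1: extract a rank-`I` decomposition of the triangular pencil
  obtain ⟨a, b, c, hdec⟩ :
      ∃ (a : Fin I → Fin I → ℝ) (b : Fin I → Fin I → ℝ) (c : Fin I → Fin 2 → ℝ),
        ∀ i j k, (![R1, R2] k) i j = ∑ r, a r i * b r j * c r k := by
    have hne : {R : ℕ | ∃ (a : Fin R → Fin I → ℝ) (b : Fin R → Fin I → ℝ)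
        (c : Fin R → Fin 2 → ℝ),
        ∀ i j k, (fun (i j : Fin I) (k : Fin 2) => (![R1, R2] k) i j) i j k
          = ∑ r, a r i * b r j * c r k}.Nonempty :=
      ⟨2 * I, decomp_base _⟩
    have hmem := Nat.sInf_mem hne
    have hinf_le : sInf {R : ℕ | ∃ (a : Fin R → Fin I → ℝ) (b : Fin R → Fin I → ℝ)
        (c : Fin R → Fin 2 → ℝ),
        ∀ i j k, (fun (i j : Fin I) (k : Fin 2) => (![R1, R2] k) i j) i j k
          = ∑ r, a r i * b r j * c r k} ≤ I := hcon
    obtain ⟨a, b, c, h⟩ := decomp_of_le hinf_le _ hmem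
    exact ⟨a, b, c, fun i j k => h i j k⟩
  set A : Matrix (Fin I) (Fin I) ℝ := Matrix.of fun i r => a r i with hA
  set B : Matrix (Fin I) (Fin I) ℝ := Matrix.of fun j r => b r j with hB
  set dv : Fin 2 → Fin I → ℝ := fun k r => c r k with hdv
  have hAD : ∀ k : Fin 2, ![R1, R2] k = A * Matrix.diagonal (dv k) * Bᵀ := by
    intro k
    ext i j
    rw [hdec i j k, Matrix.mul_apply]
    refine Finset.sum_congr rfl fun q _ => ?_
    rw [Matrix.mul_diagonal]
    simp only [hA, hB, hdv, Matrix.of_apply, Matrix.transpose_apply]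
    ring
  set Zt : Fin 2 → Matrix (Fin I) (Fin I) ℝ := fun k => Qaᵀ * sliceMat Z k * Qb with hZt
  have hZs : ∀ k, sliceMat Z k = Qa * Zt k * Qbᵀ := by
    intro k
    calc sliceMat Z k = (Qa * Qaᵀ) * sliceMat Z k * (Qb * Qbᵀ) := by
          rw [hQa2, hQb2]; simp
      _ = Qa * (Qaᵀ * sliceMat Z k * Qb) * Qbᵀ := by simp only [Matrix.mul_assoc]
      _ = Qa * Zt k * Qbᵀ := rfl
  -- objective rewriting
  have hg : ∀ (P Q S1 S2 : Matrix (Fin I) (Fin I) ℝ),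
      gsdObj Z P Q S1 S2 = ∑ k : Fin 2, sqn (sliceMat Z k - P * (![S1, S2] k) * Qᵀ) := by
    intro P Q S1 S2
    unfold gsdObj sqn
    refine Finset.sum_congr rfl fun k _ => Finset.sum_congr rfl fun i _ =>
      Finset.sum_congr rfl fun j _ => ?_
    rw [Matrix.sub_apply]
    rfl
  have hfact : ∀ (M : Fin 2 → Matrix (Fin I) (Fin I) ℝ) (k : Fin 2),
      sliceMat Z k - Qa * M k * Qbᵀ = Qa * (Zt k - M k) * Qbᵀ := by
    intro M k
    rw [hZs k, Matrix.mul_sub, Matrix.sub_mul]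
  have hbase : gsdObj Z Qa Qb R1 R2 = ∑ k : Fin 2, sqn (Zt k - ![R1, R2] k) := by
    rw [hg]
    refine Finset.sum_congr rfl fun k _ => ?_
    rw [hfact (fun k => ![R1, R2] k) k, sqn_conj _ hQa1 hQb1]
  -- Step 2: on and above the diagonal, `R` agrees with `Zt`
  have hup : ∀ (k : Fin 2) (i j : Fin I), ¬(j < i) → (![R1, R2] k) i j = Zt k i j := by
    have hRkt : ∀ k : Fin 2, (![R1, R2] k).BlockTriangular id := by
      intro k
      fin_cases k
      · exact hR1t
      · exact hR2t
    set T : Fin 2 → Matrix (Fin I) (Fin I) ℝ :=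
      fun k => Matrix.of fun i j => if j < i then 0 else Zt k i j with hT
    have hTt : ∀ k, (T k).BlockTriangular id := by
      intro k i j hij
      simp only [hT, Matrix.of_apply]
      exact if_pos hij
    have hTk : ∀ k : Fin 2, ![T 0, T 1] k = T k := by
      intro k; fin_cases k <;> rfl
    have hle := hopt Qa Qb (T 0) (T 1) hQa1 hQa2 hQb1 hQb2 (hTt 0) (hTt 1)
    rw [hbase, hg] at hle
    have hrhs : ∑ k : Fin 2, sqn (sliceMat Z k - Qa * (![T 0, T 1] k) * Qbᵀ)
        = ∑ k : Fin 2, sqn (Zt k - T k) := by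
      refine Finset.sum_congr rfl fun k _ => ?_
      rw [hTk k] at *
      rw [hfact T k, sqn_conj _ hQa1 hQb1]
    rw [hrhs] at hle
    -- pointwise analysis
    have h0 : ∀ (k : Fin 2) (i j : Fin I),
        0 ≤ ((Zt k - ![R1, R2] k) i j) ^ 2 - ((Zt k - T k) i j) ^ 2 := by
      intro k i j
      by_cases hij : j < i
      · have h1 : (![R1, R2] k) i j = 0 := hRkt k hij
        have h2 : T k i j = 0 := by simp only [hT, Matrix.of_apply]; rw [if_pos hij]
        simp only [Matrix.sub_apply, h1, h2]
        simp
      · have h2 : T k i j = Zt k i j := by simp only [hT, Matrix.of_apply]; rw [if_neg hij]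
        simp only [Matrix.sub_apply, h2, sub_self]
        simpa using sq_nonneg ((Zt k - ![R1, R2] k) i j)
    have hsum : (∑ k : Fin 2, ∑ i, ∑ j,
        (((Zt k - ![R1, R2] k) i j) ^ 2 - ((Zt k - T k) i j) ^ 2)) ≤ 0 := by
      have hexpand : ∀ k : Fin 2, ∑ i, ∑ j,
          (((Zt k - ![R1, R2] k) i j) ^ 2 - ((Zt k - T k) i j) ^ 2)
          = sqn (Zt k - ![R1, R2] k) - sqn (Zt k - T k) := by
        intro k
        unfold sqn
        rw [← Finset.sum_sub_distrib]
        refine Finset.sum_congr rfl fun i _ => ?_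
        rw [← Finset.sum_sub_distrib]
      rw [Finset.sum_congr rfl fun k _ => hexpand k, Finset.sum_sub_distrib]
      linarith
    have hzero := sum3_eq_zero h0 hsum
    intro k i j hij
    have hz := hzero k i j
    have h2 : T k i j = Zt k i j := by simp only [hT, Matrix.of_apply]; rw [if_neg hij]
    rw [Matrix.sub_apply, Matrix.sub_apply, h2, sub_self] at hz
    have : (Zt k i j - (![R1, R2] k) i j) ^ 2 = 0 := by linarith [sq_nonneg (0:ℝ)]
    have := pow_eq_zero_iff (n := 2) (by norm_num) |>.mp this
    linarith [this]
  -- Step 3: no diagonal pair vanishes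
  have hdnz : ∀ r : Fin I, ¬(R1 r r = 0 ∧ R2 r r = 0) := by
    rintro r ⟨hz1, hz2⟩
    have hZt1 : Zt 0 r r = 0 := by
      have := hup 0 r r (lt_irrefl _)
      simp only [Matrix.cons_val_zero] at this
      rw [← this, hz1]
    have hZt2 : Zt 1 r r = 0 := by
      have := hup 1 r r (lt_irrefl _)
      simp only [Matrix.cons_val_one, Matrix.head_cons, Matrix.cons_val_zero] at this
      rw [← this, hz2]
    have hdiagzero : (∑ k : Fin 2, (Zt k r r) ^ 2) = 0 := by
      rw [Fin.sum_univ_two, hZt1, hZt2]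
      norm_num
    by_cases hrI : (r : ℕ) + 1 < I
    · set j : Fin I := ⟨(r : ℕ) + 1, hrI⟩ with hj
      have hrj : r < j := by
        rw [Fin.lt_def]
        simp [hj]
      have h := (hsos r j hrj).1
      have hfil : Finset.univ.filter (fun r' : Fin I => r ≤ r' ∧ r' < j) = {r} := by
        ext r'
        simp only [Finset.mem_filter, Finset.mem_univ, true_and, Finset.mem_singleton,
          Fin.le_def, Fin.lt_def, hj]
        constructor
        · rintro ⟨h1, h2⟩
          apply Fin.ext
          omega
        · rintro rfl
          omega
      rw [hfil, Finset.sum_singleton, Finset.sum_singleton, hdiagzero] at h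
      have hnn : 0 ≤ ∑ k : Fin 2, (Zt k j r) ^ 2 :=
        Finset.sum_nonneg fun k _ => sq_nonneg _
      linarith
    · have hr1 : (r : ℕ) = I - 1 := by
        have := r.isLt
        omega
      have hige : 1 ≤ (r : ℕ) := by omega
      set i : Fin I := ⟨(r : ℕ) - 1, by omega⟩ with hi
      have hir : i < r := by
        rw [Fin.lt_def]
        simp [hi]
        omega
      have h := (hsos i r hir).2
      have hfil : Finset.univ.filter (fun r' : Fin I => i < r' ∧ r' ≤ r) = {r} := by
        ext r'
        simp only [Finset.mem_filter, Finset.mem_univ, true_and, Finset.mem_singleton,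
          Fin.le_def, Fin.lt_def, hi]
        constructor
        · rintro ⟨h1, h2⟩
          apply Fin.ext
          omega
        · rintro rfl
          omega
      rw [hfil, Finset.sum_singleton, Finset.sum_singleton, hdiagzero] at h
      have hnn : 0 ≤ ∑ k : Fin 2, (Zt k r i) ^ 2 :=
        Finset.sum_nonneg fun k _ => sq_nonneg _
      linarith
  -- Step 4: A and B are invertible
  obtain ⟨hdetA, hdetB⟩ : A.det ≠ 0 ∧ B.det ≠ 0 := by
    obtain ⟨t, ht⟩ : ∃ t : ℝ, ∀ r : Fin I, R1 r r + t * R2 r r ≠ 0 := by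
      obtain ⟨t, htt⟩ :=
        Infinite.exists_notMem_finset (Finset.univ.image fun r : Fin I => -(R1 r r) / R2 r r)
      refine ⟨t, fun r heq => ?_⟩
      by_cases h2 : R2 r r = 0
      · rw [h2, mul_zero, add_zero] at heq
        exact hdnz r ⟨heq, h2⟩
      · apply htt
        rw [Finset.mem_image]
        refine ⟨r, Finset.mem_univ r, ?_⟩
        field_simp
        linarith
    set M : Matrix (Fin I) (Fin I) ℝ := R1 + t • R2 with hM
    have hMt : M.BlockTriangular id := by
      intro i j hij
      simp [hM, Matrix.add_apply, Matrix.smul_apply, hR1t hij, hR2t hij]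
    have hMdet : M.det = ∏ r : Fin I, (R1 r r + t * R2 r r) := by
      rw [Matrix.det_of_upperTriangular hMt]
      exact Finset.prod_congr rfl fun r _ => by simp [hM]
    have hMdetnz : M.det ≠ 0 := by
      rw [hMdet]
      exact Finset.prod_ne_zero_iff.mpr fun r _ => ht r
    have hMfact : M = A * Matrix.diagonal (fun r => dv 0 r + t * dv 1 r) * Bᵀ := by
      have h1 : R1 = A * Matrix.diagonal (dv 0) * Bᵀ := by
        have := hAD 0
        simpa using this
      have h2 : R2 = A * Matrix.diagonal (dv 1) * Bᵀ := by
        have := hAD 1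
        simpa using this
      rw [hM, h1, h2]
      rw [show Matrix.diagonal (fun r => dv 0 r + t * dv 1 r)
          = Matrix.diagonal (dv 0) + t • Matrix.diagonal (dv 1) by
        ext i j
        by_cases hij : i = j
        · subst hij; simp
        · simp [Matrix.diagonal_apply_ne _ hij]]
      rw [Matrix.mul_add, Matrix.add_mul]
      congr 1
      rw [Matrix.mul_smul, Matrix.smul_mul]
    have := hMdetnz
    rw [hMfact, Matrix.det_mul, Matrix.det_mul] at this
    constructor
    · intro h0
      exact this (by rw [h0]; ring)
    · intro h0
      rw [Matrix.det_transpose] at this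
      exact this (by rw [h0]; ring)
  -- Step 5: first-order conditions along the GSD-representable family kill the residual
  have hperp : ∀ (A' B' : Matrix (Fin I) (Fin I) ℝ) (dv' : Fin 2 → Fin I → ℝ),
      (∀ k : Fin 2, ![R1, R2] k = A' * Matrix.diagonal (dv' k) * B'ᵀ) →
      ∀ T : Fin 2 → Matrix (Fin I) (Fin I) ℝ, (∀ k, (T k).BlockTriangular id) →
      (∑ k : Fin 2, ipr (Zt k - ![R1, R2] k) (A' * T k * B'ᵀ)) = 0 := by
    intro A' B' dv' hAB T hT
    obtain ⟨QA, UA, hQA1, hQA2, hUA, hfA⟩ := exists_qr A'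
    obtain ⟨QB, MB, hQB1, hQB2, hMB, hfB⟩ := exists_ql B'
    have himp : ∀ t : ℝ,
        (∑ k : Fin 2, sqn (Zt k - ![R1, R2] k)) ≤
        ∑ k : Fin 2, sqn ((Zt k - ![R1, R2] k) - t • (A' * T k * B'ᵀ)) := by
      intro t
      set R' : Fin 2 → Matrix (Fin I) (Fin I) ℝ :=
        fun k => UA * (Matrix.diagonal (dv' k) + t • T k) * MB with hR'
      have hR't : ∀ k, (R' k).BlockTriangular id := fun k =>
        (hUA.mul ((Matrix.blockTriangular_diagonal _).add (smul_bt t (hT k)))).mul hMB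
      have horth1 : (Qa * QA)ᵀ * (Qa * QA) = 1 := orth_mul hQa1 hQA1
      have horth2 : (Qb * QB)ᵀ * (Qb * QB) = 1 := orth_mul hQb1 hQB1
      have h := hopt (Qa * QA) (Qb * QB) (R' 0) (R' 1) horth1
        (mul_eq_one_comm.mp horth1) horth2 (mul_eq_one_comm.mp horth2)
        (hR't 0) (hR't 1)
      rw [hbase, hg] at h
      have hmid : ∀ k : Fin 2, (Qa * QA) * (![R' 0, R' 1] k) * (Qb * QB)ᵀ
          = Qa * ((![R1, R2] k) + t • (A' * T k * B'ᵀ)) * Qbᵀ := by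
        intro k
        have hRk' : ![R' 0, R' 1] k = R' k := by fin_cases k <;> rfl
        have hinner : QA * R' k * QBᵀ = (![R1, R2] k) + t • (A' * T k * B'ᵀ) := by
          have hMBQB : MB * QBᵀ = B'ᵀ := by
            rw [hfB, Matrix.transpose_mul, Matrix.transpose_transpose]
          calc QA * (UA * (Matrix.diagonal (dv' k) + t • T k) * MB) * QBᵀ
              = (QA * UA) * (Matrix.diagonal (dv' k) + t • T k) * (MB * QBᵀ) := by
                simp only [Matrix.mul_assoc]
            _ = A' * (Matrix.diagonal (dv' k) + t • T k) * B'ᵀ := by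
                rw [hMBQB, ← hfA]
            _ = A' * Matrix.diagonal (dv' k) * B'ᵀ + t • (A' * T k * B'ᵀ) := by
                rw [Matrix.mul_add, Matrix.add_mul, Matrix.mul_smul, Matrix.smul_mul]
            _ = (![R1, R2] k) + t • (A' * T k * B'ᵀ) := by rw [← hAB k]
        calc (Qa * QA) * (![R' 0, R' 1] k) * (Qb * QB)ᵀ
            = Qa * (QA * R' k * QBᵀ) * Qbᵀ := by
              rw [hRk', Matrix.transpose_mul]
              simp only [Matrix.mul_assoc]
          _ = Qa * ((![R1, R2] k) + t • (A' * T k * B'ᵀ)) * Qbᵀ := by rw [hinner]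
      have hrhs : ∑ k : Fin 2, sqn (sliceMat Z k - (Qa * QA) * (![R' 0, R' 1] k) * (Qb * QB)ᵀ)
          = ∑ k : Fin 2, sqn ((Zt k - ![R1, R2] k) - t • (A' * T k * B'ᵀ)) := by
        refine Finset.sum_congr rfl fun k _ => ?_
        rw [hmid k, hZs k, ← Matrix.sub_mul, ← Matrix.mul_sub]
        rw [show Zt k - ((![R1, R2] k) + t • (A' * T k * B'ᵀ))
            = (Zt k - ![R1, R2] k) - t • (A' * T k * B'ᵀ) by abel]
        exact sqn_conj _ hQa1 hQb1
      rw [hrhs] at h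
      exact h
    set s : ℝ := ∑ k : Fin 2, ipr (Zt k - ![R1, R2] k) (A' * T k * B'ᵀ) with hs
    set w : ℝ := ∑ k : Fin 2, sqn (A' * T k * B'ᵀ) with hw
    have hwnn : 0 ≤ w := Finset.sum_nonneg fun k _ => sqn_nonneg _
    refine qzero hwnn fun t => ?_
    have h := himp t
    have hexp : ∑ k : Fin 2, sqn ((Zt k - ![R1, R2] k) - t • (A' * T k * B'ᵀ))
        = (∑ k : Fin 2, sqn (Zt k - ![R1, R2] k)) - 2 * t * s + t ^ 2 * w := by
      rw [hs, hw, Fin.sum_univ_two, Fin.sum_univ_two, Fin.sum_univ_two, Fin.sum_univ_two,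
        sqn_sub_smul, sqn_sub_smul]
      ring
    rw [hexp] at h
    linarith
  have hentry : ∀ (A' B' : Matrix (Fin I) (Fin I) ℝ) (dv' : Fin 2 → Fin I → ℝ),
      (∀ k : Fin 2, ![R1, R2] k = A' * Matrix.diagonal (dv' k) * B'ᵀ) →
      ∀ (k₀ : Fin 2) (m n : Fin I), m ≤ n →
      ipr (Zt k₀ - ![R1, R2] k₀) (Matrix.of fun i j => A' i m * B' j n) = 0 := by
    intro A' B' dv' hAB k₀ m n hmn
    set T : Fin 2 → Matrix (Fin I) (Fin I) ℝ :=
      fun k => if k = k₀ then single m n else 0 with hTdef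
    have hTt : ∀ k, (T k).BlockTriangular id := by
      intro k
      by_cases hk : k = k₀
      · simp only [hTdef, if_pos hk]
        exact single_bt hmn
      · simp only [hTdef, if_neg hk]
        exact zero_bt
    have h := hperp A' B' dv' hAB T hTt
    have hTk₀ : A' * T k₀ * B'ᵀ = Matrix.of fun i j => A' i m * B' j n := by
      ext i j
      simp only [hTdef, if_pos rfl]
      rw [mul_single_mul]
      rfl
    have hTother : ∀ k, k ≠ k₀ → A' * T k * B'ᵀ = 0 := by
      intro k hk
      simp [hTdef, if_neg hk]
    have hiprzero : ∀ (X : Matrix (Fin I) (Fin I) ℝ), ipr X 0 = 0 := by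
      intro X
      simp [ipr]
    rw [Fin.sum_univ_two] at h
    fin_cases k₀
    · rw [hTother 1 (by norm_num), hiprzero] at h
      rw [← hTk₀]
      simpa using h
    · rw [hTother 0 (by norm_num), hiprzero] at h
      rw [← hTk₀]
      simpa using h
  have hADJ : ∀ k : Fin 2, ![R1, R2] k
      = (A * revMat I) * Matrix.diagonal (fun r => dv k r.rev) * (B * revMat I)ᵀ := by
    intro k
    rw [hAD k]
    have h1 : (B * revMat I)ᵀ = revMat I * Bᵀ := by
      rw [Matrix.transpose_mul, revMat_transpose]
    rw [h1]
    have h2 : revMat I * Matrix.diagonal (fun r => dv k r.rev) * revMat I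
        = Matrix.diagonal (dv k) := by
      rw [revMat_diagonal]
      funext r
      simp [Fin.rev_rev]
    calc A * Matrix.diagonal (dv k) * Bᵀ
        = A * (revMat I * Matrix.diagonal (fun r => dv k r.rev) * revMat I) * Bᵀ := by rw [h2]
      _ = A * revMat I * Matrix.diagonal (fun r => dv k r.rev) * (revMat I * Bᵀ) := by
          simp only [Matrix.mul_assoc]
  have hAL : ∀ k₀ : Fin 2, Aᵀ * (Zt k₀ - ![R1, R2] k₀) * B = 0 := by
    intro k₀
    have hexpand : ∀ (A' B' : Matrix (Fin I) (Fin I) ℝ) (m n : Fin I),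
        (A'ᵀ * (Zt k₀ - ![R1, R2] k₀) * B') m n
        = ipr (Zt k₀ - ![R1, R2] k₀) (Matrix.of fun i j => A' i m * B' j n) := by
      intro A' B' m n
      unfold ipr
      simp only [Matrix.mul_apply, Matrix.transpose_apply, Matrix.of_apply]
      refine Eq.trans (Finset.sum_congr rfl fun x _ => Finset.sum_mul _ _ _) ?_
      refine Eq.trans Finset.sum_comm ?_
      refine Finset.sum_congr rfl fun i _ => Finset.sum_congr rfl fun x _ => ?_
      ring
    ext m n
    rw [Matrix.zero_apply, hexpand A B m n]
    rcases le_or_gt m n with hmn | hnm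
    · exact hentry A B dv hAD k₀ m n hmn
    · have h := hentry (A * revMat I) (B * revMat I) (fun k r => dv k r.rev) hADJ k₀
        m.rev n.rev (by rw [Fin.rev_le_rev]; exact hnm.le)
      have heq : (Matrix.of fun i j => A i m * B j n)
          = Matrix.of fun i j => (A * revMat I) i m.rev * (B * revMat I) j n.rev := by
        ext i j
        simp only [Matrix.of_apply]
        rw [mul_revMat_apply, mul_revMat_apply, Fin.rev_rev, Fin.rev_rev]
      rw [heq]
      exact h
  have hL0 : ∀ k : Fin 2, Zt k = ![R1, R2] k := by
    intro k
    have h := hAL k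
    have hAu : IsUnit (Aᵀ).det := by
      rw [Matrix.det_transpose]
      exact isUnit_iff_ne_zero.mpr hdetA
    have hBu : IsUnit B.det := isUnit_iff_ne_zero.mpr hdetB
    have hid : Zt k - ![R1, R2] k
        = (Aᵀ)⁻¹ * (Aᵀ * (Zt k - ![R1, R2] k) * B) * B⁻¹ := by
      calc Zt k - ![R1, R2] k = 1 * (Zt k - ![R1, R2] k) * 1 := by simp
        _ = ((Aᵀ)⁻¹ * Aᵀ) * (Zt k - ![R1, R2] k) * (B * B⁻¹) := by
            rw [Matrix.nonsing_inv_mul _ hAu, Matrix.mul_nonsing_inv _ hBu]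
        _ = (Aᵀ)⁻¹ * (Aᵀ * (Zt k - ![R1, R2] k) * B) * B⁻¹ := by
            simp only [Matrix.mul_assoc]
    have hz : Zt k - ![R1, R2] k = 0 := by
      rw [hid, h]
      simp
    exact sub_eq_zero.mp hz
  -- Step 6: then Z itself has rank at most I, contradiction
  have hZdec : ∀ i j k, Z i j k
      = ∑ r, (Qa.mulVec (a r)) i * (Qb.mulVec (b r)) j * c r k := by
    intro i j k
    have hslice : sliceMat Z k = Qa * (![R1, R2] k) * Qbᵀ := by
      rw [hZs k, hL0 k]
    have hZe : Z i j k = (Qa * (![R1, R2] k) * Qbᵀ) i j := by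
      rw [← hslice]
      rfl
    rw [hZe, triple_prod Qa Qb (![R1, R2] k) a b (fun r => c r k)
      (fun p q => hdec p q k) i j]
    refine Finset.sum_congr rfl fun r _ => ?_
    simp [Matrix.mulVec, dotProduct]
  have hfin : tensorRank Z ≤ I := Nat.sInf_le ⟨_, _, _, hZdec⟩
  omega
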